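/- Let x* ∈ ℝⁿ be feasible for the NLP (cᵢ(x*) = 0 for i ≤ m̄ and cᵢ(x*) ≤ 0 for i > m̄) with ∇cᵢ(x*) ≠ 0 for all i ∈ {1,…,m}. Form the feasibility-subproblem dual data at x*: aⁱ := ∇cᵢ(x*), bᵢ := cᵢ(x*), āⁱ := aⁱ/‖aⁱ‖₂, with H₀ symmetric positive definite and X compact convex with 0 in its interior. Suppose u* = (u⁰,u¹,…,uᵐ,u^{m+1}) is dual-feasible with u^{m+1} = 0, uⁱ = ζᵢāⁱ for each i with ζᵢ ∈ [−1,1] for i ≤ m̄ and ζᵢ ∈ [0,1] for i > m̄, D(u*,0) = 0, and u* ≠ 0. Then u⁰ = 0, ζᵢ = 0 for every i > m̄ with cᵢ(x*) < 0, Σ_{i ∈ E ∪ A(x*)} ζᵢ∇cᵢ(x*) = 0 with ζᵢ ≥ 0 for i ∈ A(x*), and not all of the ζᵢ with i ∈ E ∪ A(x*) are zero; consequently the Mangasarian–Fromovitz constraint qualification fails at x*. -/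

import Mathlib

open scoped RealInnerProductSpace
open Finset

noncomputable section

/-- `ℝⁿ` with the Euclidean norm. -/
abbrev Evec (n : ℕ) : Type := EuclideanSpace ℝ (Fin n)

variable {n m : ℕ}

/-- Apply a matrix to a Euclidean vector. -/
def matApply (M : Matrix (Fin n) (Fin n) ℝ) (x : Evec n) : Evec n := Matrix.toEuclideanLin M x

/-- `āⁱ := aⁱ/‖aⁱ‖`. -/
def abar (a : Fin m → Evec n) (i : Fin m) : Evec n := ‖a i‖⁻¹ • a i

/-- `b̄ᵢ := bᵢ/‖aⁱ‖`. -/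
def bbar (a : Fin m → Evec n) (b : Fin m → ℝ) (i : Fin m) : ℝ := b i / ‖a i‖

/-- `Cᵢ`: hyperplane for equality constraints (`i.val < mbar`), half-space otherwise. -/
def Cset (mbar : ℕ) (a : Fin m → Evec n) (b : Fin m → ℝ) (i : Fin m) : Set (Evec n) :=
  if (i : ℕ) < mbar then {d | ⟪abar a i, d⟫ + bbar a b i = 0}
  else {d | ⟪abar a i, d⟫ + bbar a b i ≤ 0}

/-- Support function `δ*(y|C) = sup_{z∈C} ⟨y,z⟫` (via `sSup`). -/
def suppFn (y : Evec n) (C : Set (Evec n)) : ℝ := sSup ((fun z => ⟪y, z⟫) '' C)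

/-- Dual feasibility: `u⁰ + Σᵢ ‖aⁱ‖ uⁱ + u^{m+1} = 0` and `‖uⁱ‖ ≤ 1` for `i = 1,…,m`. -/
def DualFeasible (a : Fin m → Evec n) (u0 : Evec n) (u : Fin m → Evec n) (um1 : Evec n) : Prop :=
  (u0 + ∑ i, ‖a i‖ • u i + um1 = 0) ∧ ∀ i, ‖u i‖ ≤ 1

lemma inner_matApply_pos {M : Matrix (Fin n) (Fin n) ℝ} (hM : M.PosDef)
    {x : Evec n} (hx : x ≠ 0) : 0 < ⟪x, matApply M x⟫ := by
  have h := hM.dotProduct_mulVec_pos (x := WithLp.equiv 2 _ x) (by simpa using hx)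
  simpa [matApply, Matrix.toEuclideanLin_apply, EuclideanSpace.inner_eq_star_dotProduct, dotProduct_comm] using h

lemma inner_matApply_nonneg {M : Matrix (Fin n) (Fin n) ℝ} (hM : M.PosDef)
    (x : Evec n) : 0 ≤ ⟪x, matApply M x⟫ := by
  rcases eq_or_ne x 0 with rfl | hx
  · simp [matApply]
  · exact (inner_matApply_pos hM hx).le

lemma suppFn_Cset (mbar : ℕ) (a : Fin m → Evec n) (b : Fin m → ℝ) (i : Fin m)
    (ha : a i ≠ 0) (ζ : ℝ) (hI : mbar ≤ (i : ℕ) → 0 ≤ ζ) :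
    suppFn (ζ • abar a i) (Cset mbar a b i) = ζ * (-(bbar a b i)) := by
  have hna : ‖a i‖ ≠ 0 := norm_ne_zero_iff.mpr ha
  have habar : ⟪abar a i, abar a i⟫ = 1 := by
    rw [abar, real_inner_smul_left, real_inner_smul_right, real_inner_self_eq_norm_sq]
    field_simp
  set β := bbar a b i with hβ
  have hmm2 : ⟪abar a i, (-β) • abar a i⟫ = -β := by
    rw [real_inner_smul_right, habar]; ring
  have hmem : (-β) • abar a i ∈ Cset mbar a b i := by
    unfold Cset; split_ifs
    · show ⟪abar a i, (-β) • abar a i⟫ + bbar a b i = 0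
      rw [hmm2, ← hβ]; ring
    · show ⟪abar a i, (-β) • abar a i⟫ + bbar a b i ≤ 0
      rw [hmm2, ← hβ]; simp
  have hval : ∀ d : Evec n, ⟪ζ • abar a i, d⟫ = ζ * ⟪abar a i, d⟫ :=
    fun d => real_inner_smul_left _ _ _
  apply IsGreatest.csSup_eq
  constructor
  · refine ⟨(-β) • abar a i, hmem, ?_⟩
    show ⟪ζ • abar a i, (-β) • abar a i⟫ = ζ * (-β)
    rw [hval, real_inner_smul_right, habar]; ring
  · rintro r ⟨d, hd, rfl⟩
    simp only [hval]
    unfold Cset at hd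
    split_ifs at hd with h
    · have h1 : ⟪abar a i, d⟫ = -β := by
        have : ⟪abar a i, d⟫ + β = 0 := hd
        linarith
      rw [h1]
    · have h1 : ⟪abar a i, d⟫ ≤ -β := by
        have : ⟪abar a i, d⟫ + β ≤ 0 := hd
        linarith
      exact mul_le_mul_of_nonneg_left h1 (hI (not_lt.mp h))

/-- Let `x*` be feasible with `∇cᵢ(x*) ≠ 0` for all `i`.  Form the
feasibility-subproblem dual data at `x*` (`aⁱ := ∇cᵢ(x*)`, `bᵢ := cᵢ(x*)`, `H₀` symmetric
positive definite, `X` compact convex with `0` in its interior).  Suppose `u*` is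
dual-feasible with `u^{m+1} = 0`, `uⁱ = ζᵢāⁱ` (`ζᵢ ∈ [−1,1]` for equalities, `ζᵢ ∈ [0,1]`
for inequalities), `D(u*,0) = 0`, and `u* ≠ 0`.  Then `u⁰ = 0`, `ζᵢ = 0` for every
strictly inactive inequality, `Σ_{i∈E∪A(x*)} ζᵢ∇cᵢ(x*) = 0` with `ζᵢ ≥ 0` on `A(x*)`,
not all these `ζᵢ` vanish, and consequently the (dual form of the) MFCQ fails at `x*`. -/
theorem statement_19
    (n m mbar : ℕ) (hn : 1 ≤ n) (hmm : mbar ≤ m)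
    (f : Evec n → ℝ) (c : Fin m → Evec n → ℝ)
    (hf : ContDiff ℝ 1 f) (hc : ∀ i, ContDiff ℝ 1 (c i))
    (xstar : Evec n)
    (hfeasE : ∀ i : Fin m, (i : ℕ) < mbar → c i xstar = 0)
    (hfeasI : ∀ i : Fin m, mbar ≤ (i : ℕ) → c i xstar ≤ 0)
    (hgrad : ∀ i, gradient (c i) xstar ≠ 0)
    (H0 : Matrix (Fin n) (Fin n) ℝ) (hH0 : H0.PosDef)
    (X : Set (Evec n)) (hXne : X.Nonempty) (hXcp : IsCompact X) (hXcv : Convex ℝ X)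
    (hX0 : (0 : Evec n) ∈ interior X)
    (u0 : Evec n) (u : Fin m → Evec n)
    (hu : DualFeasible (fun i => gradient (c i) xstar) u0 u 0)
    (ζ : Fin m → ℝ)
    (hufrom : ∀ i, u i = ζ i • abar (fun j => gradient (c j) xstar) i)
    (hζE : ∀ i : Fin m, (i : ℕ) < mbar → ζ i ∈ Set.Icc (-1 : ℝ) 1)
    (hζI : ∀ i : Fin m, mbar ≤ (i : ℕ) → ζ i ∈ Set.Icc (0 : ℝ) 1)
    (hD0 : -(1/2) * ⟪u0, matApply H0⁻¹ u0⟫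
        - (∑ i, ‖gradient (c i) xstar‖ *
            suppFn (u i) (Cset mbar (fun j => gradient (c j) xstar) (fun j => c j xstar) i))
        - suppFn (0 : Evec n) X = 0)
    (hune : ¬(u0 = 0 ∧ ∀ i, u i = 0)) :
    u0 = 0 ∧
    (∀ i : Fin m, mbar ≤ (i : ℕ) → c i xstar < 0 → ζ i = 0) ∧
    (∑ i : Fin m, (if (i : ℕ) < mbar ∨ c i xstar = 0 then ζ i else 0) • gradient (c i) xstar = 0) ∧
    (∀ i : Fin m, mbar ≤ (i : ℕ) → c i xstar = 0 → 0 ≤ ζ i) ∧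
    ¬(∀ i : Fin m, ((i : ℕ) < mbar ∨ c i xstar = 0) → ζ i = 0) ∧
    ¬(∀ lam : Fin m → ℝ,
        (∀ i : Fin m, ¬((i : ℕ) < mbar ∨ c i xstar = 0) → lam i = 0) →
        (∑ i, lam i • gradient (c i) xstar = 0) →
        (∀ i : Fin m, mbar ≤ (i : ℕ) → c i xstar = 0 → 0 ≤ lam i) →
        ∀ i, lam i = 0) := by
  set a : Fin m → Evec n := fun i => gradient (c i) xstar with ha_def
  set b : Fin m → ℝ := fun i => c i xstar with hb_def
  have hna : ∀ i, ‖a i‖ ≠ 0 := fun i => norm_ne_zero_iff.mpr (hgrad i)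
  -- support function of X at 0
  have hsX : suppFn (0 : Evec n) X = 0 := by
    unfold suppFn
    have : (fun z : Evec n => ⟪(0 : Evec n), z⟫) '' X = {0} := by
      have : (fun z : Evec n => ⟪(0 : Evec n), z⟫) = fun _ => (0 : ℝ) :=
        funext fun z => inner_zero_left z
      rw [this]
      exact Set.Nonempty.image_const hXne 0
    rw [this, csSup_singleton]
  -- support function of each Cset
  have hsC : ∀ i, suppFn (u i) (Cset mbar a b i) = ζ i * (-(bbar a b i)) := by
    intro i
    rw [hufrom i]
    exact suppFn_Cset mbar a b i (hgrad i) (ζ i) (fun h => (hζI i h).1)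
  -- each summand equals -(ζ i * b i)
  have hterm : ∀ i, ‖a i‖ * suppFn (u i) (Cset mbar a b i) = -(ζ i * b i) := by
    intro i
    rw [hsC i]
    unfold bbar
    field_simp [hna i]
  -- nonnegativity of each summand
  have htermnn : ∀ i : Fin m, i ∈ Finset.univ → (0 : ℝ) ≤ -(ζ i * b i) := by
    intro i _
    rcases lt_or_ge (i : ℕ) mbar with h | h
    · have : b i = 0 := hfeasE i h
      simp [this]
    · have h1 : 0 ≤ ζ i := (hζI i h).1
      have h2 : b i ≤ 0 := hfeasI i h
      nlinarith
  have hq : 0 ≤ ⟪u0, matApply H0⁻¹ u0⟫ := inner_matApply_nonneg hH0.inv u0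
  have hS : 0 ≤ ∑ i, -(ζ i * b i) := Finset.sum_nonneg htermnn
  have hD0' : -(1/2) * ⟪u0, matApply H0⁻¹ u0⟫ - (∑ i, -(ζ i * b i)) = 0 := by
    rw [hsX] at hD0
    rw [← Finset.sum_congr rfl (fun i _ => hterm i)]
    linarith [hD0]
  -- conclude q = 0 and S = 0
  have hq0 : ⟪u0, matApply H0⁻¹ u0⟫ = 0 := by linarith
  have hS0 : ∑ i, -(ζ i * b i) = 0 := by linarith
  have hu0 : u0 = 0 := by
    by_contra h
    exact absurd hq0 (ne_of_gt (inner_matApply_pos hH0.inv h))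
  have hzb : ∀ i : Fin m, ζ i * b i = 0 := by
    intro i
    have := (Finset.sum_eq_zero_iff_of_nonneg htermnn).mp hS0 i (Finset.mem_univ i)
    linarith
  have key2 : ∀ i : Fin m, mbar ≤ (i : ℕ) → c i xstar < 0 → ζ i = 0 := by
    intro i _ hlt
    have hb : b i ≠ 0 := ne_of_lt hlt
    exact (mul_eq_zero.mp (hzb i)).resolve_right hb
  -- the gradient sum
  have hsum : ∑ i, ζ i • a i = 0 := by
    have h1 := hu.1
    rw [hu0] at h1
    have h2 : ∑ i, ‖a i‖ • u i = 0 := by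
      simpa using h1
    rw [← h2]
    refine Finset.sum_congr rfl fun i _ => ?_
    rw [hufrom i]
    show ζ i • a i = ‖a i‖ • ζ i • (‖a i‖⁻¹ • a i)
    rw [smul_smul, smul_smul, mul_comm (‖a i‖) (ζ i), mul_assoc,
      mul_inv_cancel₀ (hna i), mul_one]
  have hsum' : ∑ i : Fin m, (if (i : ℕ) < mbar ∨ c i xstar = 0 then ζ i else 0) • a i = 0 := by
    rw [← hsum]
    refine Finset.sum_congr rfl fun i _ => ?_
    split_ifs with h
    · rfl
    · push_neg at h
      have h1 : mbar ≤ (i : ℕ) := h.1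
      have h2 : c i xstar < 0 := lt_of_le_of_ne (hfeasI i h1) h.2
      rw [key2 i h1 h2]
  have keynz : ¬(∀ i : Fin m, ((i : ℕ) < mbar ∨ c i xstar = 0) → ζ i = 0) := by
    intro hall
    apply hune
    refine ⟨hu0, fun i => ?_⟩
    have hz : ζ i = 0 := by
      by_cases h : ((i : ℕ) < mbar ∨ c i xstar = 0)
      · exact hall i h
      · push_neg at h
        exact key2 i h.1 (lt_of_le_of_ne (hfeasI i h.1) h.2)
    rw [hufrom i, hz, zero_smul]
  refine ⟨hu0, key2, hsum', fun i hi hc0 => (hζI i hi).1, keynz, ?_⟩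
  intro h
  apply keynz
  have hall := h (fun i => if (i : ℕ) < mbar ∨ c i xstar = 0 then ζ i else 0)
    (fun i hi => if_neg hi) hsum'
    (fun i h1 h2 => by simp only [if_pos (Or.inr h2)]; exact (hζI i h1).1)
  intro i hi
  have h2 := hall i
  simp only [if_pos hi] at h2
  exact h2
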